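/- arXiv:1904.11320 — 3 statements merged into one kernel-verified Lean document; each statement's English description precedes it below -/
import Mathlib

section
/- Let V be a real vector space with a quadratic form q and associated symmetric bilinear form B (so B(x, x) = q(x)). Let h1, h2 ∈ V be nonzero vectors such that q is positive definite on the span of {h1, h2}, i.e., q(w) > 0 for every nonzero w in span{h1, h2}. Assume there exists e ∈ V with q(e) < 0 and B(e, h1) = B(e, h2) = 0. Then there exists v ∈ V with q(v) > 0, q(h1)·q(v) − B(h1, v)² < 0, and q(h2)·q(v) − B(h2, v)² < 0. -/
private lemma aux_real (a1 a2 qw B1 B2 ε : ℝ) (ha1 : 0 < a1) (ha2 : 0 < a2)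
    (hε : 0 < ε) (hB1 : B1 ≠ 0) (hB2 : B2 ≠ 0)
    (cs1 : B1 ^ 2 ≤ a1 * qw) (cs2 : B2 ^ 2 ≤ a2 * qw) :
    ∃ s : ℝ, 0 ≤ s ∧ 0 < qw - s * ε ∧ a1 * (qw - s * ε) - B1 ^ 2 < 0 ∧
      a2 * (qw - s * ε) - B2 ^ 2 < 0 := by
  set δ := min (B1 ^ 2 / a1) (B2 ^ 2 / a2) with hδ
  have hδ1 : δ ≤ B1 ^ 2 / a1 := min_le_left _ _
  have hδ2 : δ ≤ B2 ^ 2 / a2 := min_le_right _ _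
  have hδpos : 0 < δ := lt_min (div_pos (by positivity) ha1) (div_pos (by positivity) ha2)
  have hδqw : δ ≤ qw := le_trans hδ1 (by rw [div_le_iff₀ ha1] at *; nlinarith)
  refine ⟨(qw - δ / 2) / ε, div_nonneg (by linarith) hε.le, ?_, ?_, ?_⟩
  · have : (qw - δ / 2) / ε * ε = qw - δ / 2 := div_mul_cancel₀ _ hε.ne'
    rw [this]; linarith
  · have : (qw - δ / 2) / ε * ε = qw - δ / 2 := div_mul_cancel₀ _ hε.ne'
    rw [this]
    have : δ / 2 < B1 ^ 2 / a1 := by linarith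
    rw [div_lt_div_iff₀ (by norm_num) ha1] at this
    nlinarith
  · have : (qw - δ / 2) / ε * ε = qw - δ / 2 := div_mul_cancel₀ _ hε.ne'
    rw [this]
    have : δ / 2 < B2 ^ 2 / a2 := by linarith
    rw [div_lt_div_iff₀ (by norm_num) ha2] at this
    nlinarith

/-- Coordinate-free content of Case 3 of the proof of Theorem 1.1: if `q` is
positive definite on `span{h1, h2}` and there is a vector `e` with `q(e) < 0`
orthogonal to both `h1` and `h2`, then there exists `v` with `q(v) > 0` whose
Gram determinants with `h1` and `h2` are both negative. -/
theorem stmt2 {V : Type*} [AddCommGroup V] [Module ℝ V]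
    (q : QuadraticForm ℝ V) (B : LinearMap.BilinForm ℝ V)
    (hBsymm : ∀ x y : V, B x y = B y x) (hBq : ∀ x : V, B x x = q x)
    (h1 h2 : V) (hh1 : h1 ≠ 0) (hh2 : h2 ≠ 0)
    (hposdef : ∀ w ∈ Submodule.span ℝ ({h1, h2} : Set V), w ≠ 0 → 0 < q w)
    (hneg : ∃ e : V, q e < 0 ∧ B e h1 = 0 ∧ B e h2 = 0) :
    ∃ v : V, 0 < q v ∧ q h1 * q v - (B h1 v) ^ 2 < 0 ∧
      q h2 * q v - (B h2 v) ^ 2 < 0 := by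
  obtain ⟨e, he, he1, he2⟩ := hneg
  -- expansion lemma
  have expand : ∀ (x y : V) (c : ℝ),
      q (x + c • y) = q x + 2 * c * B x y + c ^ 2 * q y := by
    intro x y c
    rw [← hBq, ← hBq, ← hBq]
    simp only [map_add, map_smul, LinearMap.add_apply, LinearMap.smul_apply, smul_eq_mul]
    rw [hBsymm y x]; ring
  have mem1 : h1 ∈ Submodule.span ℝ ({h1, h2} : Set V) :=
    Submodule.subset_span (by simp)
  have mem2 : h2 ∈ Submodule.span ℝ ({h1, h2} : Set V) :=
    Submodule.subset_span (by simp)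
  have ha1 : 0 < q h1 := hposdef h1 mem1 hh1
  have ha2 : 0 < q h2 := hposdef h2 mem2 hh2
  have hqnn : ∀ w ∈ Submodule.span ℝ ({h1, h2} : Set V), 0 ≤ q w := by
    intro w hw
    by_cases h : w = 0
    · simp [h]
    · exact (hposdef w hw h).le
  -- Cauchy–Schwarz on the span
  have CS : ∀ x ∈ Submodule.span ℝ ({h1, h2} : Set V),
      ∀ y ∈ Submodule.span ℝ ({h1, h2} : Set V),
      (B x y) ^ 2 ≤ q x * q y := by
    intro x hx y hy
    have hx0 : 0 ≤ q x := hqnn x hx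
    by_cases hqx : q x = 0
    · -- then B x y = 0 : use q(y + c x) ≥ 0 for all c
      have key : ∀ c : ℝ, 0 ≤ q y + 2 * c * B y x := by
        intro c
        have := hqnn (y + c • x) (Submodule.add_mem _ hy (Submodule.smul_mem _ _ hx))
        rw [expand y x c, hqx] at this; linarith [this]
      have hBxy : B x y = 0 := by
        by_contra hB
        have hthis := key ((-q y - 1) / (2 * B x y))
        rw [hBsymm y x] at hthis
        have hc : 2 * ((-q y - 1) / (2 * B x y)) * B x y = -q y - 1 := by
          field_simp
        rw [hc] at hthis
        linarith
      rw [hBxy, hqx]; nlinarith [hqnn y hy]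
    · have hqxpos : 0 < q x := lt_of_le_of_ne hx0 (Ne.symm hqx)
      have := hqnn ((B x y) • x - (q x) • y)
        (Submodule.sub_mem _ (Submodule.smul_mem _ _ hx) (Submodule.smul_mem _ _ hy))
      have hexp : q ((B x y) • x - (q x) • y)
          = q x * (q x * q y - (B x y) ^ 2) := by
        rw [← hBq]
        simp only [map_sub, map_smul, LinearMap.sub_apply, LinearMap.smul_apply, smul_eq_mul]
        rw [hBsymm y x, hBq, hBq]; ring
      rw [hexp] at this
      nlinarith
  -- choose w in the span with B h1 w ≠ 0 and B h2 w ≠ 0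
  obtain ⟨w, hwmem, hw0, hB1w, hB2w⟩ :
      ∃ w, w ∈ Submodule.span ℝ ({h1, h2} : Set V) ∧ w ≠ 0 ∧
        B h1 w ≠ 0 ∧ B h2 w ≠ 0 := by
    by_cases h12 : B h1 h2 = 0
    · refine ⟨h1 + h2, Submodule.add_mem _ mem1 mem2, ?_, ?_, ?_⟩
      · intro h
        have : h1 = -h2 := by linear_combination (norm := abel) h
        rw [this] at ha1
        have : q (-h2) = q h2 := by simp [← hBq]
        rw [this] at ha1
        have h12' : B h1 h2 = 0 := h12
        rw [‹h1 = -h2›] at h12'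
        simp only [map_neg, LinearMap.neg_apply, hBq] at h12'
        linarith
      · simp only [map_add, hBq, h12]; linarith
      · simp only [map_add]
        rw [hBsymm h2 h1, h12, hBq]; linarith
    · exact ⟨h1, mem1, hh1, by rw [hBq]; exact ha1.ne',
        by rw [hBsymm h2 h1]; exact h12⟩
  have hqw : 0 < q w := hposdef w hwmem hw0
  -- orthogonality of e to w
  have hew : B w e = 0 := by
    have : ∀ x ∈ Submodule.span ℝ ({h1, h2} : Set V), B x e = 0 := by
      intro x hx
      induction hx using Submodule.span_induction with
      | mem x hx =>
        rcases hx with h | h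
        · rw [h, hBsymm]; exact he1
        · rw [Set.mem_singleton_iff] at h; rw [h, hBsymm]; exact he2
      | zero => simp
      | add x y _ _ hx hy => simp [hx, hy]
      | smul c x _ hx => simp [hx]
    exact this w hwmem
  have hee1 : B h1 e = 0 := by rw [hBsymm]; exact he1
  have hee2 : B h2 e = 0 := by rw [hBsymm]; exact he2
  obtain ⟨s, hs0, hs1, hs2, hs3⟩ := aux_real (q h1) (q h2) (q w) (B h1 w) (B h2 w) (-(q e))
    ha1 ha2 (by linarith) hB1w hB2w (CS h1 mem1 w hwmem) (CS h2 mem2 w hwmem)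
  set t := Real.sqrt s with ht
  have ht2 : t ^ 2 = s := Real.sq_sqrt hs0
  refine ⟨w + t • e, ?_, ?_, ?_⟩
  · rw [expand w e t, hew, ht2]
    have : q w + 2 * t * 0 + s * q e = q w - s * -(q e) := by ring
    rw [this]; exact hs1
  · have hBv : B h1 (w + t • e) = B h1 w := by
      simp [map_add, map_smul, hee1]
    rw [hBv, expand w e t, hew, ht2]
    have : q h1 * (q w + 2 * t * 0 + s * q e) = q h1 * (q w - s * -(q e)) := by ring
    rw [this]; exact hs2
  · have hBv : B h2 (w + t • e) = B h2 w := by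
      simp [map_add, map_smul, hee2]
    rw [hBv, expand w e t, hew, ht2]
    have : q h2 * (q w + 2 * t * 0 + s * q e) = q h2 * (q w - s * -(q e)) := by ring
    rw [this]; exact hs3
end

section
/- Let n ≥ 4 and let q be a quadratic form on ℝⁿ (the space Fin n → ℝ) of signature (3, n − 3), i.e., there is a basis e : Fin n → ℝⁿ with B(e i, e j) = 0 for i ≠ j, q(e i) > 0 for exactly three indices i and q(e i) < 0 for the remaining indices, where B is the symmetric bilinear form associated with q (B(x, x) = q(x)). Let h1, h2 ∈ ℤⁿ be nonzero integral vectors such that q is positive definite on the span of {h1, h2} in ℝⁿ (q(w) > 0 for every nonzero w in that span). Then there exists a nonzero integral vector h3 ∈ ℤⁿ with q(h3) > 0, q(h1)·q(h3) − B(h1, h3)² < 0, and q(h2)·q(h3) − B(h2, h3)² < 0. -/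
section auxlemmas
variable {E : Type*} [AddCommGroup E] [Module ℝ E]
variable (q : QuadraticForm ℝ E) (B : LinearMap.BilinForm ℝ E)

private lemma Bexp (u H m : E) (t : ℝ) : B u (t • H + m) = t * B u H + B u m := by
  simp [map_add, map_smul, smul_eq_mul]

private lemma qexp (hBq : ∀ x, B x x = q x) (hBsymm : ∀ x y, B x y = B y x)
    (H m : E) (t : ℝ) :
    q (t • H + m) = q H * t ^ 2 + 2 * B H m * t + q m := by
  rw [← hBq, ← hBq, ← hBq]
  simp only [map_add, map_smul, LinearMap.add_apply, LinearMap.smul_apply, smul_eq_mul]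
  rw [hBsymm m H]
  ring

private lemma aux2 (hBq : ∀ x, B x x = q x) (hBsymm : ∀ x y, B x y = B y x)
    (H u m : E) (s : ℝ)
    (hroot : q (s • H + m) = 0)
    (hBuv : B u (s • H + m) ≠ 0)
    (hafter : ∀ t : ℝ, s < t → 0 < q (t • H + m)) :
    ∃ t : ℚ, 0 < q ((t : ℝ) • H + m) ∧
      q u * q ((t : ℝ) • H + m) - (B u ((t : ℝ) • H + m)) ^ 2 < 0 := by
  set f : ℝ → ℝ := fun t => q u * q (t • H + m) - (B u (t • H + m)) ^ 2 with hfdef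
  have hfeq : f = fun t => q u * (q H * t ^ 2 + 2 * B H m * t + q m)
      - (t * B u H + B u m) ^ 2 := by
    funext t
    show q u * q (t • H + m) - (B u (t • H + m)) ^ 2 = _
    rw [qexp q B hBq hBsymm, Bexp]
  have hf : Continuous f := by rw [hfeq]; continuity
  have hfs : f s < 0 := by
    have h2 : 0 < (B u (s • H + m)) ^ 2 := pow_two_pos_of_ne_zero hBuv
    show q u * q (s • H + m) - (B u (s • H + m)) ^ 2 < 0
    rw [hroot]
    linarith
  have hopen : IsOpen {t : ℝ | f t < 0} := isOpen_lt hf continuous_const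
  obtain ⟨δ, hδ, hball⟩ := Metric.isOpen_iff.1 hopen s hfs
  obtain ⟨t, ht1, ht2⟩ := exists_rat_btwn (lt_add_of_pos_right s hδ)
  refine ⟨t, hafter _ ht1, ?_⟩
  have hmem : (t : ℝ) ∈ Metric.ball s δ := by
    rw [Metric.mem_ball, Real.dist_eq, abs_sub_lt_iff]
    constructor <;> linarith
  exact hball hmem

private lemma aux (hBq : ∀ x, B x x = q x) (hBsymm : ∀ x y, B x y = B y x)
    (H u m : E) (hq1 : 0 < q H) (hqm : q m < 0) (hum : B u m ≠ 0) :
    ∃ t : ℚ, 0 < q ((t : ℝ) • H + m) ∧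
      q u * q ((t : ℝ) • H + m) - (B u ((t : ℝ) • H + m)) ^ 2 < 0 := by
  set q1 := q H with hq1def
  set β := B H m with hβdef
  set qm := q m with hqmdef
  have hq1ne : q1 ≠ 0 := ne_of_gt hq1
  have hdisc : 0 < β ^ 2 - q1 * qm := by nlinarith [sq_nonneg β, mul_neg_of_pos_of_neg hq1 hqm]
  set sd := Real.sqrt (β ^ 2 - q1 * qm) with hsddef
  have hsd : 0 < sd := Real.sqrt_pos.2 hdisc
  have hsd2 : sd ^ 2 = β ^ 2 - q1 * qm := Real.sq_sqrt hdisc.le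
  set sp := (-β + sd) / q1 with hspdef
  set sm := (-β - sd) / q1 with hsmdef
  have hrootp : q (sp • H + m) = 0 := by
    rw [qexp q B hBq hBsymm, hspdef]
    field_simp
    nlinarith [hsd2]
  have hrootm : q (sm • H + m) = 0 := by
    rw [qexp q B hBq hBsymm, hsmdef]
    field_simp
    nlinarith [hsd2]
  by_cases hp : B u (sp • H + m) ≠ 0
  · -- use root sp, move right
    apply aux2 q B hBq hBsymm H u m sp hrootp hp
    intro t ht
    rw [qexp q B hBq hBsymm]
    have h1 : sd < q1 * t + β := by
      rw [hspdef] at ht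
      rw [div_lt_iff₀ hq1] at ht
      nlinarith
    have h2 : (β ^ 2 - q1 * qm) < (q1 * t + β) ^ 2 := by nlinarith [hsd.le]
    nlinarith
  · push_neg at hp
    have hm' : B u (sm • H + m) ≠ 0 := by
      intro hm0
      have hBuH : B u H = 0 := by
        have hd : B u (sp • H + m) - B u (sm • H + m) = (sp - sm) * B u H := by
          rw [Bexp, Bexp]; ring
        rw [hp, hm0] at hd
        have hspsm : sp - sm ≠ 0 := by
          rw [hspdef, hsmdef, div_sub_div_same]
          intro h
          rw [div_eq_zero_iff] at h
          rcases h with h | h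
          · linarith
          · exact hq1ne h
        have h0 : (sp - sm) * B u H = 0 := by linarith
        rcases mul_eq_zero.1 h0 with h | h
        · exact absurd h hspsm
        · exact h
      apply hum
      have := Bexp B u H m sp
      rw [hp, hBuH] at this
      linarith [this]
    -- use root sm with H replaced by -H
    have e1 : q ((-sm) • (-H) + m) = 0 := by
      rw [smul_neg, neg_smul, neg_neg]; exact hrootm
    have e2 : B u ((-sm) • (-H) + m) ≠ 0 := by
      rw [smul_neg, neg_smul, neg_neg]; exact hm'
    have e3 : ∀ t : ℝ, -sm < t → 0 < q (t • (-H) + m) := by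
      intro t ht
      rw [smul_neg, ← neg_smul]
      rw [qexp q B hBq hBsymm]
      have h1 : q1 * (-t) + β < -sd := by
        have hts : -t < sm := by linarith
        rw [hsmdef] at hts
        rw [lt_div_iff₀ hq1] at hts
        nlinarith
      have h2 : (β ^ 2 - q1 * qm) < (q1 * (-t) + β) ^ 2 := by nlinarith [hsd.le]
      nlinarith
    obtain ⟨t, ht1, ht2⟩ := aux2 q B hBq hBsymm (-H) u m (-sm) e1 e2 e3
    have hc : ((-t : ℚ) : ℝ) • H + m = (t : ℝ) • (-H) + m := by
      push_cast; rw [smul_neg, neg_smul]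
    exact ⟨-t, by rw [hc]; exact ht1, by rw [hc]; exact ht2⟩

end auxlemmas

private lemma qcont {n : ℕ} (q : QuadraticForm ℝ (Fin n → ℝ))
    (B : LinearMap.BilinForm ℝ (Fin n → ℝ)) (hBq : ∀ x, B x x = q x) :
    Continuous fun x : Fin n → ℝ => q x := by
  have hx : ∀ x : Fin n → ℝ,
      q x = ∑ j, x j * B (fun k => if j = k then (1:ℝ) else 0) x := by
    intro x
    rw [← hBq]
    nth_rewrite 1 [pi_eq_sum_univ x]
    rw [map_sum, LinearMap.sum_apply]
    refine Finset.sum_congr rfl fun j _ => ?_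
    rw [map_smul, LinearMap.smul_apply, smul_eq_mul]
  have : (fun x : Fin n → ℝ => q x)
      = fun x => ∑ j, x j * B (fun k => if j = k then (1:ℝ) else 0) x := funext hx
  rw [this]
  exact continuous_finset_sum _ fun j _ =>
    (continuous_apply j).mul (B (fun k => if j = k then (1:ℝ) else 0)).continuous_of_finiteDimensional

/-- Case 3 of the proof of Theorem 1.1, stated for the lattice `ℤⁿ`: for a
quadratic form of signature `(3, n - 3)` positive definite on the span of the
integral classes `h1, h2`, there is a nonzero integral class `h3` with
`q(h3) > 0` and negative Gram determinants with `h1` and `h2`. -/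
theorem stmt9 {n : ℕ} (hn : 4 ≤ n)
    (q : QuadraticForm ℝ (Fin n → ℝ)) (B : LinearMap.BilinForm ℝ (Fin n → ℝ))
    (hBsymm : ∀ x y, B x y = B y x) (hBq : ∀ x, B x x = q x)
    (e : Module.Basis (Fin n) ℝ (Fin n → ℝ))
    (horth : ∀ i j : Fin n, i ≠ j → B (e i) (e j) = 0)
    (S : Finset (Fin n)) (hScard : S.card = 3)
    (hpos : ∀ i ∈ S, 0 < q (e i)) (hneg : ∀ i ∉ S, q (e i) < 0)
    (h1 h2 : Fin n → ℤ) (hh1 : h1 ≠ 0) (hh2 : h2 ≠ 0)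
    (hposdef : ∀ w ∈ Submodule.span ℝ
      ({fun i => (h1 i : ℝ), fun i => (h2 i : ℝ)} : Set (Fin n → ℝ)),
      w ≠ 0 → 0 < q w) :
    ∃ h3 : Fin n → ℤ, h3 ≠ 0 ∧ 0 < q (fun i => (h3 i : ℝ)) ∧
      q (fun i => (h1 i : ℝ)) * q (fun i => (h3 i : ℝ)) -
        (B (fun i => (h1 i : ℝ)) (fun i => (h3 i : ℝ))) ^ 2 < 0 ∧
      q (fun i => (h2 i : ℝ)) * q (fun i => (h3 i : ℝ)) -
        (B (fun i => (h2 i : ℝ)) (fun i => (h3 i : ℝ))) ^ 2 < 0 := by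
  set H1 : Fin n → ℝ := fun i => (h1 i : ℝ) with hH1def
  set H2 : Fin n → ℝ := fun i => (h2 i : ℝ) with hH2def
  have hH1ne : H1 ≠ 0 := by
    intro h
    apply hh1
    funext i
    have := congrFun h i
    simp only [hH1def, Pi.zero_apply] at this
    exact_mod_cast this
  have hH2ne : H2 ≠ 0 := by
    intro h
    apply hh2
    funext i
    have := congrFun h i
    simp only [hH2def, Pi.zero_apply] at this
    exact_mod_cast this
  have hq1 : 0 < q H1 :=
    hposdef H1 (Submodule.subset_span (Set.mem_insert _ _)) hH1ne
  have hq2 : 0 < q H2 :=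
    hposdef H2 (Submodule.subset_span (Set.mem_insert_of_mem _ rfl)) hH2ne
  -- a negative basis vector
  have hSne : ∃ i, i ∉ S := by
    by_contra h
    push_neg at h
    have : S = Finset.univ := Finset.eq_univ_of_forall h
    rw [this, Finset.card_univ, Fintype.card_fin] at hScard
    omega
  obtain ⟨i0, hi0⟩ := hSne
  set x0 : Fin n → ℝ := e i0 with hx0def
  have hx0 : q x0 < 0 := hneg i0 hi0
  -- a real vector y with q y < 0 and B H2 y ≠ 0
  have hy : ∃ y : Fin n → ℝ, q y < 0 ∧ B H2 y ≠ 0 := by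
    by_cases hB0 : B H2 x0 ≠ 0
    · exact ⟨x0, hx0, hB0⟩
    · push_neg at hB0
      set ε := Real.sqrt (-q x0 / (2 * q H2)) with hεdef
      have hεpos : 0 < ε := Real.sqrt_pos.2 (div_pos (by linarith) (by linarith))
      have hε2 : ε ^ 2 = -q x0 / (2 * q H2) := Real.sq_sqrt (le_of_lt (div_pos (by linarith) (by linarith)))
      refine ⟨x0 + ε • H2, ?_, ?_⟩
      · have hexp : q (x0 + ε • H2) = q x0 + 2 * (ε * B x0 H2) + ε ^ 2 * q H2 := by
          rw [← hBq, ← hBq, ← hBq]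
          simp only [map_add, map_smul, LinearMap.add_apply, LinearMap.smul_apply, smul_eq_mul]
          rw [hBsymm H2 x0]
          ring
        rw [hexp, hBsymm x0 H2, hB0, hε2]
        have : -q x0 / (2 * q H2) * q H2 = -q x0 / 2 := by field_simp
        rw [this]
        linarith
      · have : B H2 (x0 + ε • H2) = B H2 x0 + ε * q H2 := by
          rw [map_add, map_smul, smul_eq_mul, hBq]
        rw [this, hB0, zero_add]
        positivity
  obtain ⟨y, hyneg, hyB⟩ := hy
  -- rational approximation
  have hU : IsOpen {x : Fin n → ℝ | q x < 0 ∧ B H2 x ≠ 0} := by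
    have h1o : IsOpen {x : Fin n → ℝ | q x < 0} :=
      isOpen_lt (qcont q B hBq) continuous_const
    have h2o : IsOpen {x : Fin n → ℝ | B H2 x ≠ 0} :=
      isOpen_ne_fun (B H2).continuous_of_finiteDimensional continuous_const
    exact h1o.inter h2o
  obtain ⟨δ, hδ, hball⟩ := Metric.isOpen_iff.1 hU y ⟨hyneg, hyB⟩
  have hr : ∃ r : Fin n → ℚ, (fun i => (r i : ℝ)) ∈ Metric.ball y δ := by
    have : ∀ i : Fin n, ∃ c : ℚ, |y i - c| < δ := fun i => exists_rat_near (y i) hδ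
    choose r hrr using this
    refine ⟨r, ?_⟩
    rw [Metric.mem_ball]
    rw [dist_pi_lt_iff hδ]
    intro i
    rw [Real.dist_eq, abs_sub_comm]
    exact hrr i
  obtain ⟨r, hrb⟩ := hr
  obtain ⟨hrneg, hrB⟩ := hball hrb
  set R : Fin n → ℝ := fun i => (r i : ℝ) with hRdef
  -- clear denominators
  set d : ℕ := ∏ i, (r i).den with hddef
  have hdpos : 0 < d := Finset.prod_pos fun i _ => (r i).pos
  set m : Fin n → ℤ := fun i => (r i).num * ((d / (r i).den : ℕ) : ℤ) with hmdef
  have hmcast : (fun i => (m i : ℝ)) = (d : ℝ) • R := by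
    funext i
    have hdvd : (r i).den ∣ d := Finset.dvd_prod_of_mem _ (Finset.mem_univ i)
    have hcancel : ((d / (r i).den : ℕ) : ℚ) * ((r i).den : ℚ) = (d : ℚ) := by
      rw [← Nat.cast_mul, Nat.div_mul_cancel hdvd]
    have hq : ((m i : ℚ)) = (d : ℚ) * r i := by
      calc ((m i : ℚ)) = ((r i).num : ℚ) * ((d / (r i).den : ℕ) : ℚ) := by
            simp only [hmdef, Int.cast_mul, Int.cast_natCast]
        _ = (r i * ((r i).den : ℚ)) * ((d / (r i).den : ℕ) : ℚ) := by
            rw [← Rat.mul_den_eq_num]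
        _ = r i * (((d / (r i).den : ℕ) : ℚ) * ((r i).den : ℚ)) := by ring
        _ = (d : ℚ) * r i := by rw [hcancel]; ring
    have : ((m i : ℚ) : ℝ) = (((d : ℚ) * r i : ℚ) : ℝ) := by rw [hq]
    push_cast at this
    simpa [hRdef] using this
  set M : Fin n → ℝ := fun i => (m i : ℝ) with hMdef
  have hMR : M = (d : ℝ) • R := hmcast
  have hqM : q M < 0 := by
    rw [hMR]
    rw [QuadraticMap.map_smul, smul_eq_mul]
    have hdd : (0:ℝ) < (d:ℝ) * (d:ℝ) := by positivity
    exact mul_neg_of_pos_of_neg hdd hrneg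
  have hBM : B H2 M ≠ 0 := by
    rw [hMR, map_smul, smul_eq_mul]
    exact mul_ne_zero (by positivity) hrB
  -- apply aux
  obtain ⟨t, ht1, ht2⟩ := aux q B hBq hBsymm H1 H2 M hq1 hqM hBM
  set w : Fin n → ℝ := (t : ℝ) • H1 + M with hwdef
  -- build h3
  have hbpos : (0:ℝ) < (t.den : ℝ) := by exact_mod_cast t.pos
  have hnum : (t.num : ℝ) = (t : ℝ) * (t.den : ℝ) := by
    have := congrArg (fun x : ℚ => (x : ℝ)) (Rat.mul_den_eq_num t)
    push_cast at this
    linarith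
  have hcast : (fun i => ((t.num * h1 i + (t.den : ℤ) * m i : ℤ) : ℝ))
      = (t.den : ℝ) • w := by
    funext i
    simp only [hwdef, Pi.smul_apply, Pi.add_apply, smul_eq_mul]
    push_cast
    rw [hnum]
    ring
  have hq3 : q (fun i => ((t.num * h1 i + (t.den : ℤ) * m i : ℤ) : ℝ))
      = (t.den : ℝ) ^ 2 * q w := by
    rw [hcast, QuadraticMap.map_smul, smul_eq_mul]
    ring
  have hq3pos : 0 < q (fun i => ((t.num * h1 i + (t.den : ℤ) * m i : ℤ) : ℝ)) := by
    rw [hq3]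
    have : (0:ℝ) < (t.den : ℝ) ^ 2 := by positivity
    nlinarith
  have hB1 : B H1 (fun i => ((t.num * h1 i + (t.den : ℤ) * m i : ℤ) : ℝ))
      = (t.den : ℝ) * B H1 w := by
    rw [hcast, map_smul, smul_eq_mul]
  have hB2 : B H2 (fun i => ((t.num * h1 i + (t.den : ℤ) * m i : ℤ) : ℝ))
      = (t.den : ℝ) * B H2 w := by
    rw [hcast, map_smul, smul_eq_mul]
  refine ⟨fun i => t.num * h1 i + (t.den : ℤ) * m i, ?_, hq3pos, ?_, ?_⟩
  · intro h0
    have : (fun i => ((t.num * h1 i + (t.den : ℤ) * m i : ℤ) : ℝ)) = 0 := by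
      funext i
      have := congrFun h0 i
      simp only [Pi.zero_apply] at this ⊢
      rw [this]
      exact Int.cast_zero
    rw [this] at hq3pos
    simp only [QuadraticMap.map_zero] at hq3pos
    exact lt_irrefl 0 hq3pos
  · have key : q H1 * q w - (B H1 w) ^ 2 = q H1 * q M - (B H1 M) ^ 2 := by
      rw [hwdef, qexp q B hBq hBsymm, Bexp, hBq]
      ring
    have keyneg : q H1 * q w - (B H1 w) ^ 2 < 0 := by
      rw [key]
      nlinarith [sq_nonneg (B H1 M), mul_neg_of_pos_of_neg hq1 hqM]
    have goal_eq : q H1 * q (fun i => ((t.num * h1 i + (t.den : ℤ) * m i : ℤ) : ℝ))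
        - (B H1 (fun i => ((t.num * h1 i + (t.den : ℤ) * m i : ℤ) : ℝ))) ^ 2
        = (t.den : ℝ) ^ 2 * (q H1 * q w - (B H1 w) ^ 2) := by
      rw [hq3, hB1]
      ring
    rw [goal_eq]
    have : (0:ℝ) < (t.den : ℝ) ^ 2 := by positivity
    exact mul_neg_of_pos_of_neg this keyneg
  · have goal_eq : q H2 * q (fun i => ((t.num * h1 i + (t.den : ℤ) * m i : ℤ) : ℝ))
        - (B H2 (fun i => ((t.num * h1 i + (t.den : ℤ) * m i : ℤ) : ℝ))) ^ 2
        = (t.den : ℝ) ^ 2 * (q H2 * q w - (B H2 w) ^ 2) := by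
      rw [hq3, hB2]
      ring
    rw [goal_eq]
    have : (0:ℝ) < (t.den : ℝ) ^ 2 := by positivity
    exact mul_neg_of_pos_of_neg this ht2
end

section
/- Let q be a quadratic form on ℝⁿ (the space Fin n → ℝ) of signature (3, n − 3), i.e., there is a basis e : Fin n → ℝⁿ with B(e i, e j) = 0 for i ≠ j, q(e i) > 0 for exactly three indices i and q(e i) < 0 for the remaining indices, where B is the symmetric bilinear form associated with q (B(x, x) = q(x)). Let h1, h2 ∈ ℤⁿ be integral vectors with q(h1) > 0 and q(h2) > 0. Then there exists a nonzero integral vector h3 ∈ ℤⁿ with q(h3) > 0, q(h1)·q(h3) − B(h1, h3)² ≠ 0, and q(h2)·q(h3) − B(h2, h3)² ≠ 0. -/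
/-- Case 4 of the proof of Theorem 1.1, stated for the lattice `ℤⁿ`: for a
quadratic form of signature `(3, n - 3)` and integral classes `h1, h2` of
positive square, there is a nonzero integral class `h3` with `q(h3) > 0` and
nonvanishing Gram determinants with `h1` and `h2`. -/
theorem stmt10 {n : ℕ}
    (q : QuadraticForm ℝ (Fin n → ℝ)) (B : LinearMap.BilinForm ℝ (Fin n → ℝ))
    (hBsymm : ∀ x y, B x y = B y x) (hBq : ∀ x, B x x = q x)
    (e : Module.Basis (Fin n) ℝ (Fin n → ℝ))
    (horth : ∀ i j : Fin n, i ≠ j → B (e i) (e j) = 0)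
    (S : Finset (Fin n)) (hScard : S.card = 3)
    (hpos : ∀ i ∈ S, 0 < q (e i)) (hneg : ∀ i ∉ S, q (e i) < 0)
    (h1 h2 : Fin n → ℤ)
    (hq1 : 0 < q (fun i => (h1 i : ℝ))) (hq2 : 0 < q (fun i => (h2 i : ℝ))) :
    ∃ h3 : Fin n → ℤ, h3 ≠ 0 ∧ 0 < q (fun i => (h3 i : ℝ)) ∧
      q (fun i => (h1 i : ℝ)) * q (fun i => (h3 i : ℝ)) -
        (B (fun i => (h1 i : ℝ)) (fun i => (h3 i : ℝ))) ^ 2 ≠ 0 ∧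
      q (fun i => (h2 i : ℝ)) * q (fun i => (h3 i : ℝ)) -
        (B (fun i => (h2 i : ℝ)) (fun i => (h3 i : ℝ))) ^ 2 ≠ 0 := by
    classical
  set v1 : Fin n → ℝ := fun i => (h1 i : ℝ) with hv1
  set v2 : Fin n → ℝ := fun i => (h2 i : ℝ) with hv2
  -- express q via B everywhere
  have hq1' : 0 < B v1 v1 := by rw [hBq]; exact hq1
  have hq2' : 0 < B v2 v2 := by rw [hBq]; exact hq2
  -- Step 1: find u₀ in the positive 3-space with B v1 u₀ = 0 = B v2 u₀ and B u₀ u₀ > 0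
  haveI : Fintype {x // x ∈ S} := inferInstance
  have hcard : Fintype.card {x // x ∈ S} = 3 := by
    rw [Fintype.card_coe, hScard]
  let ℓ : ({x // x ∈ S} → ℝ) →ₗ[ℝ] (Fin n → ℝ) :=
    { toFun := fun c => ∑ i : {x // x ∈ S}, c i • e i.1
      map_add' := by
        intro a b
        simp [add_smul, Finset.sum_add_distrib]
      map_smul' := by
        intro m a
        simp [Finset.smul_sum, smul_smul] }
  let F : ({x // x ∈ S} → ℝ) →ₗ[ℝ] ℝ × ℝ :=
    ((B v1).comp ℓ).prod ((B v2).comp ℓ)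
  have hker : ∃ c : {x // x ∈ S} → ℝ, c ≠ 0 ∧ F c = 0 := by
    by_contra hcon
    push_neg at hcon
    have hinj : Function.Injective F := by
      rw [← LinearMap.ker_eq_bot, LinearMap.ker_eq_bot']
      intro m hm
      by_contra hm0
      exact hcon m hm0 hm
    have hle := LinearMap.finrank_le_finrank_of_injective hinj
    rw [Module.finrank_fintype_fun_eq_card, hcard] at hle
    have : Module.finrank ℝ (ℝ × ℝ) = 2 := by
      simp [Module.finrank_prod]
    omega
  obtain ⟨c, hc0, hFc⟩ := hker
  set u₀ : Fin n → ℝ := ℓ c with hu₀def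
  have hBu1 : B v1 u₀ = 0 := congrArg Prod.fst hFc
  have hBu2 : B v2 u₀ = 0 := congrArg Prod.snd hFc
  have hdiag : B u₀ u₀ = ∑ i : {x // x ∈ S}, (c i) ^ 2 * B (e i.1) (e i.1) := by
    have h₁ : B u₀ u₀ = B (∑ i : {x // x ∈ S}, c i • e i.1)
        (∑ i : {x // x ∈ S}, c i • e i.1) := rfl
    rw [h₁, map_sum B _ Finset.univ, LinearMap.sum_apply]
    refine Finset.sum_congr rfl fun i _ => ?_
    rw [map_smul B, LinearMap.smul_apply, map_sum (B (e i.1)) _ Finset.univ,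
      Finset.smul_sum, Finset.sum_eq_single i]
    · rw [map_smul]
      simp only [smul_eq_mul]; ring
    · intro j _ hji
      have hij : (i : Fin n) ≠ (j : Fin n) := fun h => hji (Subtype.ext h.symm)
      rw [map_smul]
      simp [horth _ _ hij]
    · intro h; exact absurd (Finset.mem_univ i) h
  have hqu₀ : 0 < B u₀ u₀ := by
    rw [hdiag]
    obtain ⟨i₀, hi₀⟩ : ∃ i, c i ≠ 0 := by
      by_contra hall; push_neg at hall
      exact hc0 (funext hall)
    refine Finset.sum_pos' (fun i _ => ?_) ⟨i₀, Finset.mem_univ i₀, ?_⟩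
    · have := hpos i.1 i.2
      rw [← hBq] at this
      positivity
    · have := hpos i₀.1 i₀.2
      rw [← hBq] at this
      have h2 : 0 < (c i₀) ^ 2 := by positivity
      positivity
  -- Step 2: continuity
  set δ : Fin n → (Fin n → ℝ) := fun i => Pi.single i 1 with hδ
  have hrep : ∀ u : Fin n → ℝ, u = ∑ i, u i • δ i := by
    intro u
    have := Finset.univ_sum_single u
    rw [← this]
    refine Finset.sum_congr rfl fun i _ => ?_
    ext j
    simp [δ, Pi.single_apply]
  have hBlin : ∀ x u : Fin n → ℝ, B x u = ∑ j, u j * B x (δ j) := by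
    intro x u
    conv_lhs => rw [hrep u]
    rw [map_sum]
    exact Finset.sum_congr rfl fun j _ => by rw [map_smul, smul_eq_mul]
  have hBexp : ∀ u : Fin n → ℝ, B u u = ∑ j, u j * ∑ i, u i * B (δ j) (δ i) := by
    intro u
    rw [hBlin u u]
    refine Finset.sum_congr rfl fun j _ => ?_
    rw [hBsymm u (δ j), hBlin (δ j) u]
  have hqcont : Continuous fun u : Fin n → ℝ => B u u := by
    have heq : (fun u : Fin n → ℝ => B u u)
        = fun u => ∑ j, u j * ∑ i, u i * B (δ j) (δ i) := funext hBexp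
    rw [heq]
    refine continuous_finset_sum _ fun j _ => (continuous_apply j).mul ?_
    refine continuous_finset_sum _ fun i _ => ?_
    exact (continuous_apply i).mul continuous_const
  have hBcont : ∀ x : Fin n → ℝ, Continuous fun u => B x u := fun x =>
    (B x).continuous_of_finiteDimensional
  -- Step 3: the good open set
  set U : Set (Fin n → ℝ) := {u | 0 < B u u ∧
      B v1 v1 * B u u - (B v1 u) ^ 2 ≠ 0 ∧ B v2 v2 * B u u - (B v2 u) ^ 2 ≠ 0} with hU
  have hUopen : IsOpen U := by
    refine IsOpen.inter (isOpen_lt continuous_const hqcont) (IsOpen.inter ?_ ?_)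
    · exact isOpen_ne_fun ((continuous_const.mul hqcont).sub ((hBcont v1).pow 2))
        continuous_const
    · exact isOpen_ne_fun ((continuous_const.mul hqcont).sub ((hBcont v2).pow 2))
        continuous_const
  have hu₀U : u₀ ∈ U := by
    refine ⟨hqu₀, ?_, ?_⟩
    · rw [hBu1]
      simpa using (mul_pos hq1' hqu₀).ne'
    · rw [hBu2]
      simpa using (mul_pos hq2' hqu₀).ne'
  -- Step 4: find a rational point in U
  have hdense : Dense (Set.pi Set.univ fun _ : Fin n => Set.range ((↑) : ℚ → ℝ)) :=
    dense_pi Set.univ fun i _ => Rat.denseRange_cast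
  obtain ⟨x, hxD, hxU⟩ := hdense.exists_mem_open hUopen ⟨u₀, hu₀U⟩
  choose r hr using fun i => hxD i (Set.mem_univ i)
  have hx : x = fun i => (r i : ℝ) := by
    funext i; exact (hr i).symm
  rw [hx] at hxU
  -- Step 5: clear denominators
  set N : ℤ := ∏ i, ((r i).den : ℤ) with hN
  have hNpos : 0 < N := Finset.prod_pos fun i _ => by exact_mod_cast (r i).pos
  set w : Fin n → ℝ := fun i => (r i : ℝ) with hw
  simp only [U, Set.mem_setOf_eq] at hxU
  obtain ⟨hw0, hw1, hw2⟩ := hxU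
  set h3 : Fin n → ℤ := fun i => (r i).num * (N / ((r i).den : ℤ)) with hh3
  have hcast : (fun i => ((h3 i : ℤ) : ℝ)) = (N : ℝ) • w := by
    funext i
    have hd : ((r i).den : ℤ) ∣ N := Finset.dvd_prod_of_mem _ (Finset.mem_univ i)
    have hk : ((r i).den : ℤ) * (N / ((r i).den : ℤ)) = N := Int.mul_ediv_cancel' hd
    have hden : ((r i).den : ℝ) ≠ 0 := by
      exact_mod_cast (r i).den_nz
    have hnum : ((r i).num : ℝ) = (r i : ℝ) * ((r i).den : ℝ) := by
      rw [Rat.cast_def]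
      field_simp
    have hkR : (((r i).den : ℤ) : ℝ) * ((N / ((r i).den : ℤ) : ℤ) : ℝ) = (N : ℝ) := by
      exact_mod_cast congrArg (fun z : ℤ => (z : ℝ)) hk
    simp only [hh3, Pi.smul_apply, smul_eq_mul, hw]
    push_cast [hnum]
    push_cast at hkR
    calc (r i : ℝ) * ((r i).den : ℝ) * ((N / ((r i).den : ℤ) : ℤ) : ℝ)
        = (r i : ℝ) * (((r i).den : ℝ) * ((N / ((r i).den : ℤ) : ℤ) : ℝ)) := by ring
      _ = (r i : ℝ) * (N : ℝ) := by rw [hkR]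
      _ = (N : ℝ) * (r i : ℝ) := by ring
  have hNne : (N : ℝ) ≠ 0 := by
    have := hNpos.ne'
    exact_mod_cast this
  have hBscale : ∀ v : Fin n → ℝ, B v ((N:ℝ) • w) = (N:ℝ) * B v w := by
    intro v; rw [map_smul, smul_eq_mul]
  have hBscale2 : B ((N:ℝ) • w) ((N:ℝ) • w) = (N:ℝ)^2 * B w w := by
    rw [map_smul, hBsymm ((N:ℝ) • w) w, hBscale, smul_eq_mul]; ring
  have hq3 : 0 < B (fun i => ((h3 i : ℤ) : ℝ)) (fun i => ((h3 i : ℤ) : ℝ)) := by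
    rw [hcast, hBscale2]
    have : 0 < (N:ℝ)^2 := by positivity
    exact mul_pos this hw0
  refine ⟨h3, ?_, ?_, ?_, ?_⟩
  · intro h0
    have hzz : (fun i => ((h3 i : ℤ) : ℝ)) = (0 : Fin n → ℝ) := by
      rw [h0]; funext i; simp
    rw [hzz] at hq3
    simp only [map_zero, LinearMap.zero_apply] at hq3
    exact lt_irrefl 0 hq3
  · rw [← hBq]
    exact hq3
  · rw [← hBq, ← hBq, hcast, hBscale2, hBscale]
    have : B v1 v1 * ((N:ℝ)^2 * B w w) - ((N:ℝ) * B v1 w)^2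
        = (N:ℝ)^2 * (B v1 v1 * B w w - (B v1 w)^2) := by ring
    rw [this]
    exact mul_ne_zero (pow_ne_zero 2 hNne) hw1
  · rw [← hBq, ← hBq, hcast, hBscale2, hBscale]
    have : B v2 v2 * ((N:ℝ)^2 * B w w) - ((N:ℝ) * B v2 w)^2
        = (N:ℝ)^2 * (B v2 v2 * B w w - (B v2 w)^2) := by ring
    rw [this]
    exact mul_ne_zero (pow_ne_zero 2 hNne) hw2
end
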